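/- For all 𝒯-valued stopping times τ and τ', |E[Y_τ] − E[Y_{τ'}]| ≤ C · Q(τ ≠ τ')^{1/2}, where C = 2‖Φ‖_{L²(Q)} with Φ = Σ_{t∈𝒯} |Y_t|. -/

import Mathlib

open MeasureTheory
open scoped ENNReal NNReal

section Aux

variable {T Ω : Type*} [Fintype T] [LinearOrder T] [m0 : MeasurableSpace Ω]

lemma stopping_aux_meas_eq (𝓕 : T → MeasurableSpace Ω) (hle : ∀ t, 𝓕 t ≤ m0)
    (σ : Ω → T) (hσ : ∀ t, MeasurableSet[𝓕 t] {ω | σ ω ≤ t}) (t : T) :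
    MeasurableSet {ω | σ ω = t} := by
  have h1 : MeasurableSet {ω | σ ω ≤ t} := hle t _ (hσ t)
  have h2 : MeasurableSet {ω | σ ω < t} := by
    have : {ω | σ ω < t} = ⋃ s ∈ Finset.univ.filter (· < t), {ω | σ ω ≤ s} := by
      ext ω
      simp only [Set.mem_setOf_eq, Set.mem_iUnion, Finset.mem_filter, Finset.mem_univ, true_and]
      exact ⟨fun h => ⟨σ ω, h, le_rfl⟩, fun ⟨s, hs, hs'⟩ => lt_of_le_of_lt hs' hs⟩
    rw [this]
    exact (Finset.univ.filter (· < t)).measurableSet_biUnion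
      (fun s _ => hle s _ (hσ s))
  have : {ω | σ ω = t} = {ω | σ ω ≤ t} \ {ω | σ ω < t} := by
    ext ω
    simp only [Set.mem_setOf_eq, Set.mem_diff]
    exact ⟨fun h => ⟨h.le, by simp [h]⟩, fun ⟨h1, h2⟩ => le_antisymm h1 (not_lt.mp h2)⟩
  rw [this]; exact h1.diff h2

lemma stopping_aux_meas_val (𝓕 : T → MeasurableSpace Ω) (hle : ∀ t, 𝓕 t ≤ m0)
    (Y : T → Ω → ℝ) (hY : ∀ t, Measurable (Y t))
    (σ : Ω → T) (hσ : ∀ t, MeasurableSet[𝓕 t] {ω | σ ω ≤ t}) :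
    Measurable (fun ω => Y (σ ω) ω) := by
  have heq : (fun ω => Y (σ ω) ω)
      = fun ω => ∑ t, Set.indicator {ω' | σ ω' = t} (Y t) ω := by
    funext ω
    rw [Finset.sum_eq_single (σ ω)]
    · simp [Set.indicator_apply]
    · intro t _ ht
      simp [Set.indicator_apply, fun h : σ ω = t => ht h.symm]
      intro h; exact absurd h.symm ht
    · simp
  rw [heq]
  exact Finset.measurable_sum _ fun t _ =>
    (hY t).indicator (stopping_aux_meas_eq 𝓕 hle σ hσ t)

end Aux

/-- **Continuity of the value of stopping times** (Lemma 3.2, second assertion).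

`T` is a finite nonempty linearly ordered set, `(Ω, 𝓐, Q)` a probability space with a
filtration `𝓕`, and `(Y t)` an adapted family of rewards with `Φ = Σ_t |Y_t|`
square-integrable.  For any two `T`-valued stopping times `τ, τ'`,
`|E[Y_τ] − E[Y_{τ'}]| ≤ C · Q(τ ≠ τ')^{1/2}` with `C = 2‖Φ‖_{L²(Q)}`. -/
theorem stopping_value_diff_le
    {T Ω : Type*} [Fintype T] [Nonempty T] [LinearOrder T]
    [m0 : MeasurableSpace Ω] (Q : Measure Ω) [IsProbabilityMeasure Q]
    (𝓕 : T → MeasurableSpace Ω) (hmono : Monotone 𝓕) (hle : ∀ t, 𝓕 t ≤ m0)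
    (Y : T → Ω → ℝ) (hadp : ∀ t, Measurable[𝓕 t] (Y t))
    (hΦ : Integrable (fun ω => (∑ t, |Y t ω|) ^ 2) Q)
    (τ τ' : Ω → T)
    (hτ : ∀ t, MeasurableSet[𝓕 t] {ω | τ ω ≤ t})
    (hτ' : ∀ t, MeasurableSet[𝓕 t] {ω | τ' ω ≤ t}) :
    |(∫ ω, Y (τ ω) ω ∂Q) - ∫ ω, Y (τ' ω) ω ∂Q| ≤
      (2 * Real.sqrt (∫ ω, (∑ t, |Y t ω|) ^ 2 ∂Q)) *
        Real.sqrt ((Q {ω | τ ω ≠ τ' ω}).toReal) := by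
  classical
  set Φ : Ω → ℝ := fun ω => ∑ t, |Y t ω| with hΦdef
  have hYm : ∀ t, Measurable (Y t) := fun t => (hadp t).mono (hle t) le_rfl
  have hΦm : Measurable Φ := Finset.measurable_sum _ fun t _ => (hYm t).abs
  have hΦnn : ∀ ω, 0 ≤ Φ ω := fun ω => Finset.sum_nonneg fun t _ => abs_nonneg _
  have hΦ2 : MemLp Φ 2 Q :=
    (memLp_two_iff_integrable_sq hΦm.aestronglyMeasurable).2 hΦ
  have hΦint : Integrable Φ Q := hΦ2.integrable one_le_two
  -- the stopped processes
  have hgτ : Measurable (fun ω => Y (τ ω) ω) := stopping_aux_meas_val 𝓕 hle Y hYm τ hτ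
  have hgτ' : Measurable (fun ω => Y (τ' ω) ω) := stopping_aux_meas_val 𝓕 hle Y hYm τ' hτ'
  have hbound : ∀ (σ : Ω → T) ω, |Y (σ ω) ω| ≤ Φ ω := fun σ ω =>
    Finset.single_le_sum (f := fun t => |Y t ω|) (fun t _ => abs_nonneg _) (Finset.mem_univ _)
  have hiτ : Integrable (fun ω => Y (τ ω) ω) Q :=
    hΦint.mono hgτ.aestronglyMeasurable (Filter.Eventually.of_forall fun ω => by
      simpa [Real.norm_eq_abs, abs_of_nonneg (hΦnn ω)] using hbound τ ω)
  have hiτ' : Integrable (fun ω => Y (τ' ω) ω) Q :=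
    hΦint.mono hgτ'.aestronglyMeasurable (Filter.Eventually.of_forall fun ω => by
      simpa [Real.norm_eq_abs, abs_of_nonneg (hΦnn ω)] using hbound τ' ω)
  -- the set where they differ
  set A : Set Ω := {ω | τ ω ≠ τ' ω} with hAdef
  have hA : MeasurableSet A := by
    have : A = (⋃ t, {ω | τ ω = t} ∩ {ω | τ' ω = t})ᶜ := by
      ext ω
      simp only [Set.mem_compl_iff, Set.mem_iUnion, Set.mem_inter_iff, Set.mem_setOf_eq, hAdef]
      constructor
      · intro h ⟨t, h1, h2⟩; exact h (h1.trans h2.symm)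
      · intro h hne; exact h ⟨τ ω, rfl, hne.symm⟩
    rw [this]
    exact (MeasurableSet.iUnion fun t =>
      ((stopping_aux_meas_eq 𝓕 hle τ hτ t).inter (stopping_aux_meas_eq 𝓕 hle τ' hτ' t))).compl
  -- indicator of A
  set g : Ω → ℝ := A.indicator (fun _ => 1) with hgdef
  have hg2 : MemLp g 2 Q := (memLp_const (1 : ℝ)).indicator hA
  -- pointwise bound
  have hpt : ∀ ω, |Y (τ ω) ω - Y (τ' ω) ω| ≤ 2 * (Φ ω * g ω) := by
    intro ω
    by_cases h : τ ω = τ' ω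
    · have : g ω = 0 := by simp [hgdef, Set.indicator_apply, hAdef, h]
      simp [h, this]
    · have : g ω = 1 := by simp [hgdef, Set.indicator_apply, hAdef, h]
      rw [this, mul_one]
      calc |Y (τ ω) ω - Y (τ' ω) ω| ≤ |Y (τ ω) ω| + |Y (τ' ω) ω| := abs_sub _ _
        _ ≤ Φ ω + Φ ω := add_le_add (hbound τ ω) (hbound τ' ω)
        _ = 2 * Φ ω := by ring
  -- integrability of the dominating function
  have higA : Integrable (fun ω => Φ ω * g ω) Q := by
    have : (fun ω => Φ ω * g ω) = A.indicator Φ := by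
      funext ω
      by_cases h : ω ∈ A <;> simp [hgdef, Set.indicator_apply, h]
    rw [this]
    exact hΦint.indicator hA
  -- Hölder / Cauchy-Schwarz
  have hpq : Real.HolderConjugate 2 2 := Real.holderConjugate_iff.mpr ⟨one_lt_two, by norm_num⟩
  have hCS : ∫ ω, Φ ω * g ω ∂Q ≤
      (∫ ω, Φ ω ^ (2 : ℝ) ∂Q) ^ ((1 : ℝ)/2) * (∫ ω, g ω ^ (2 : ℝ) ∂Q) ^ ((1 : ℝ)/2) := by
    have h2 : (ENNReal.ofReal (2 : ℝ)) = 2 := by norm_num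
    refine integral_mul_le_Lp_mul_Lq_of_nonneg hpq
      (Filter.Eventually.of_forall hΦnn)
      (Filter.Eventually.of_forall fun ω => ?_) (h2 ▸ hΦ2) (h2 ▸ hg2)
    exact Set.indicator_nonneg (fun _ _ => zero_le_one) ω
  have hg2int : ∫ ω, g ω ^ (2 : ℝ) ∂Q = (Q A).toReal := by
    have : (fun ω => g ω ^ (2 : ℝ)) = A.indicator (fun _ => (1 : ℝ)) := by
      funext ω
      by_cases h : ω ∈ A <;> simp [hgdef, Set.indicator_apply, h]
    rw [this, integral_indicator_const _ hA]
    simp [measureReal_def]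
  have hΦ2eq : ∫ ω, Φ ω ^ (2 : ℝ) ∂Q = ∫ ω, Φ ω ^ (2 : ℕ) ∂Q := by
    refine integral_congr_ae (Filter.Eventually.of_forall fun ω => ?_)
    beta_reduce
    rw [← Real.rpow_natCast (Φ ω) 2]
    norm_num
  -- assemble
  have key : |(∫ ω, Y (τ ω) ω ∂Q) - ∫ ω, Y (τ' ω) ω ∂Q| ≤ 2 * ∫ ω, Φ ω * g ω ∂Q := by
    rw [← integral_sub hiτ hiτ']
    calc |∫ ω, (Y (τ ω) ω - Y (τ' ω) ω) ∂Q| ≤ ∫ ω, |Y (τ ω) ω - Y (τ' ω) ω| ∂Q :=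
          by simpa [Real.norm_eq_abs] using
            norm_integral_le_integral_norm (fun ω => Y (τ ω) ω - Y (τ' ω) ω)
      _ ≤ ∫ ω, 2 * (Φ ω * g ω) ∂Q := by
          refine integral_mono ((hiτ.sub hiτ').abs) (higA.const_mul 2)
            fun ω => hpt ω
      _ = 2 * ∫ ω, Φ ω * g ω ∂Q := integral_const_mul 2 _
  have hnn : (0 : ℝ) ≤ ∫ ω, Φ ω ^ (2 : ℕ) ∂Q :=
    integral_nonneg fun ω => sq_nonneg _
  calc |(∫ ω, Y (τ ω) ω ∂Q) - ∫ ω, Y (τ' ω) ω ∂Q| ≤ 2 * ∫ ω, Φ ω * g ω ∂Q := key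
    _ ≤ 2 * ((∫ ω, Φ ω ^ (2 : ℝ) ∂Q) ^ ((1 : ℝ)/2) * (∫ ω, g ω ^ (2 : ℝ) ∂Q) ^ ((1 : ℝ)/2)) := by
        linarith [hCS]
    _ = (2 * Real.sqrt (∫ ω, (∑ t, |Y t ω|) ^ 2 ∂Q)) *
        Real.sqrt ((Q {ω | τ ω ≠ τ' ω}).toReal) := by
        rw [hg2int, hΦ2eq, ← Real.sqrt_eq_rpow, ← Real.sqrt_eq_rpow]
        ring
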